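/- Let q be an odd prime power with q ≡ 1 (mod 4) and χ the quadratic character of F_q. Define S_n = Σ_A χ(det A) over all n×n symmetric tridiagonal matrices A over F_q. Then for every m ≥ 1, S_{2m} = q^{2m−1}(q−1)^m. -/

import Mathlib

/-- The `n × n` symmetric tridiagonal matrix with diagonal entries `x` and
off-diagonal (super/sub-diagonal) entries `r`. -/
def triMat {R : Type*} [CommRing R] (n : ℕ) (x : Fin n → R) (r : Fin (n - 1) → R) :
    Matrix (Fin n) (Fin n) R :=
  Matrix.of fun i j =>
    if i = j then x i
    else if h : (i : ℕ) + 1 = (j : ℕ) then r ⟨i, by have := j.isLt; omega⟩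
    else if h' : (j : ℕ) + 1 = (i : ℕ) then r ⟨j, by have := i.isLt; omega⟩
    else 0

/-- The character sum `S_n = ∑_A χ(det A)` over all `n × n` symmetric tridiagonal
matrices over `F_q`. -/
def charSumST (F : Type*) [Field F] [Fintype F] [DecidableEq F] (n : ℕ) : ℤ :=
  ∑ p : (Fin n → F) × (Fin (n - 1) → F), quadraticChar F (triMat n p.1 p.2).det

set_option linter.unusedSectionVars false

namespace CharSumAux

/-- shift of an `ℕ`-indexed sequence -/
def shf {F : Type*} (f : ℕ → F) : ℕ → F := fun i => f (i + 1)

/-- recursive determinant of tridiagonal matrices -/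
def Dp {F : Type*} [Field F] : ℕ → (ℕ → F) → (ℕ → F) → F
  | 0, _, _ => 1
  | 1, x, _ => x 0
  | (n+2), x, r =>
      x 0 * Dp (n+1) (shf x) (shf r) - (r 0)^2 * Dp n (shf (shf x)) (shf (shf r))

/-- tridiagonal matrix from `ℕ`-indexed data -/
def triMat' {F : Type*} [Field F] (n : ℕ) (x r : ℕ → F) : Matrix (Fin n) (Fin n) F :=
  Matrix.of fun i j =>
    if (i : ℕ) = (j : ℕ) then x i
    else if (i : ℕ) + 1 = (j : ℕ) then r i
    else if (j : ℕ) + 1 = (i : ℕ) then r j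
    else 0

variable {F : Type*} [Field F]

lemma val_succAbove {n : ℕ} (p : Fin (n+1)) (i : Fin n) :
    ((p.succAbove i : Fin (n+1)) : ℕ) = if (i : ℕ) < (p : ℕ) then (i : ℕ) else (i : ℕ) + 1 := by
  rcases Nat.lt_or_ge (i : ℕ) (p : ℕ) with h | h
  · rw [Fin.succAbove_of_castSucc_lt p i (by simpa [Fin.lt_def] using h), if_pos h]
    simp
  · rw [Fin.succAbove_of_le_castSucc p i (by simpa [Fin.le_def] using h), if_neg (by omega)]
    simp

lemma succAbove_one_zero {n : ℕ} :
    (Fin.succ (0 : Fin (n+1))).succAbove (0 : Fin (n+1)) = (0 : Fin (n+2)) := by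
  apply Fin.ext; rw [val_succAbove]; simp

lemma succAbove_one_succ {n : ℕ} (j : Fin n) :
    (Fin.succ (0 : Fin (n+1))).succAbove (Fin.succ j) = Fin.succ (Fin.succ j) := by
  apply Fin.ext; rw [val_succAbove]; simp

lemma sub_succ_succ (n : ℕ) (x r : ℕ → F) :
    (triMat' (n+1) x r).submatrix Fin.succ Fin.succ = triMat' n (shf x) (shf r) := by
  ext i j
  simp only [Matrix.submatrix_apply, triMat', Matrix.of_apply, Fin.val_succ, shf]
  split_ifs <;> first | rfl | omega

lemma det_triMat' : ∀ (n : ℕ) (x r : ℕ → F), (triMat' n x r).det = Dp n x r := by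
  intro n
  induction n using Nat.strong_induction_on with
  | _ n ih =>
    match n with
    | 0 => intro x r; simp [Dp, Matrix.det_fin_zero]
    | 1 =>
      intro x r
      rw [Matrix.det_fin_one]
      simp [Dp, triMat']
    | (n+2) =>
      intro x r
      rw [Matrix.det_succ_row_zero, Fin.sum_univ_succ, Fin.sum_univ_succ]
      have hA00 : triMat' (n+2) x r 0 0 = x 0 := by simp [triMat']
      have hA01 : triMat' (n+2) x r 0 (Fin.succ 0) = r 0 := by
        simp [triMat', Fin.val_succ]
      have htail : ∀ j : Fin n,
          triMat' (n+2) x r 0 (Fin.succ (Fin.succ j)) = 0 := by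
        intro j
        simp only [triMat', Matrix.of_apply, Fin.val_succ, Fin.val_zero]
        split_ifs <;> first | rfl | omega | exact (False.elim ‹False›)
      rw [Finset.sum_eq_zero (fun j _ => by rw [htail j]; ring)]
      have hm1 : (triMat' (n+2) x r).submatrix Fin.succ ((0 : Fin (n+2)).succAbove)
          = triMat' (n+1) (shf x) (shf r) := by
        rw [Fin.succAbove_zero]
        exact sub_succ_succ (n+1) x r
      have hm2 : Matrix.det ((triMat' (n+2) x r).submatrix Fin.succ
            ((Fin.succ 0 : Fin (n+2)).succAbove))
          = r 0 * Dp n (shf (shf x)) (shf (shf r)) := by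
        set M := (triMat' (n+2) x r).submatrix Fin.succ ((Fin.succ 0 : Fin (n+2)).succAbove)
          with hM
        rw [Matrix.det_succ_column_zero, Fin.sum_univ_succ]
        have hM00 : M 0 0 = r 0 := by
          show triMat' (n+2) x r (Fin.succ 0) ((Fin.succ 0).succAbove 0) = r 0
          rw [succAbove_one_zero]
          simp [triMat']
        have htail2 : ∀ i : Fin n, M (Fin.succ i) 0 = 0 := by
          intro i
          show triMat' (n+2) x r (Fin.succ (Fin.succ i)) ((Fin.succ 0).succAbove 0) = 0
          rw [succAbove_one_zero]
          simp only [triMat', Matrix.of_apply, Fin.val_succ, Fin.val_zero]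
          split_ifs <;> first | rfl | omega | exact (False.elim ‹False›)
        rw [Finset.sum_eq_zero (fun i _ => by rw [htail2 i]; ring)]
        have hsub : M.submatrix ((0 : Fin (n+1)).succAbove) Fin.succ
            = ((triMat' (n+2) x r).submatrix Fin.succ Fin.succ).submatrix Fin.succ Fin.succ := by
          ext i j
          show triMat' (n+2) x r (Fin.succ ((0 : Fin (n+1)).succAbove i))
            ((Fin.succ 0).succAbove (Fin.succ j)) = _
          rw [Fin.succAbove_zero, succAbove_one_succ]
          rfl
        rw [hsub, sub_succ_succ, sub_succ_succ, ih n (by omega)]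
        rw [hM00]
        simp
      rw [hm1, hm2, hA00, hA01, ih (n+1) (by omega)]
      simp only [Fin.val_zero, Fin.val_succ, Dp]
      ring

/-- extend a `Fin n`-tuple by zero -/
def ex {n : ℕ} (f : Fin n → F) : ℕ → F := fun i => if h : i < n then f ⟨i, h⟩ else 0

lemma triMat_eq {n : ℕ} (X : Fin n → F) (R : Fin (n-1) → F) :
    triMat n X R = triMat' n (ex X) (ex R) := by
  ext i j
  simp only [triMat, triMat', Matrix.of_apply, ex]
  by_cases h1 : (i : ℕ) = (j : ℕ)
  · rw [if_pos (Fin.ext h1), if_pos h1, dif_pos i.isLt]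
  · rw [if_neg (fun h => h1 (by rw [h])), if_neg h1]
    by_cases h2 : (i : ℕ) + 1 = (j : ℕ)
    · rw [dif_pos h2, if_pos h2, dif_pos (show (i:ℕ) < n - 1 by have := j.isLt; omega)]
    · rw [dif_neg h2, if_neg h2]
      by_cases h3 : (j : ℕ) + 1 = (i : ℕ)
      · rw [dif_pos h3, if_pos h3, dif_pos (show (j:ℕ) < n - 1 by have := i.isLt; omega)]
      · rw [dif_neg h3, if_neg h3]

lemma ex_cons_zero {n : ℕ} (a : F) (f : Fin n → F) : ex (Fin.cons a f) 0 = a := by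
  simp only [ex]
  rw [dif_pos (Nat.succ_pos n)]
  exact Fin.cons_zero (α := fun _ => F) a f

lemma shf_ex_cons {n : ℕ} (a : F) (f : Fin n → F) : shf (ex (Fin.cons a f)) = ex f := by
  funext i
  simp only [shf, ex]
  rcases Nat.lt_or_ge i n with h | h
  · rw [dif_pos (by omega), dif_pos h]
    exact Fin.cons_succ (α := fun _ => F) a f ⟨i, h⟩
  · rw [dif_neg (by omega), dif_neg (by omega)]

end CharSumAux

namespace CharSumAux

variable (F : Type*) [Field F] [Fintype F] [DecidableEq F]

/-- the character sum, in recursive form -/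
def S (n : ℕ) : ℤ :=
  ∑ x : Fin n → F, ∑ r : Fin (n-1) → F, quadraticChar F (Dp n (ex x) (ex r))

/-- the conditioned character sum -/
def T (n : ℕ) : ℤ :=
  ∑ x : Fin n → F, ∑ r : Fin (n-1) → F,
    if Dp n (ex x) (ex r) = 0 then
      (quadraticChar F (Dp (n-1) (shf (ex x)) (shf (ex r))) : ℤ) else 0

variable {F}

lemma S_eq_charSumST (n : ℕ) : charSumST F n = S F n := by
  unfold charSumST S
  rw [Fintype.sum_prod_type]
  refine Finset.sum_congr rfl fun x _ => Finset.sum_congr rfl fun r _ => ?_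
  rw [triMat_eq, det_triMat']

lemma sum_pi_succ {n : ℕ} (g : (Fin (n+1) → F) → ℤ) :
    ∑ f : Fin (n+1) → F, g f = ∑ a : F, ∑ t : Fin n → F, g (Fin.cons a t) := by
  rw [← (Fin.consEquiv (fun _ : Fin (n+1) => F)).sum_comp g, Fintype.sum_prod_type]
  rfl

lemma peel {n : ℕ} (g : (Fin (n+2) → F) → (Fin (n+1) → F) → ℤ) :
    (∑ x : Fin (n+2) → F, ∑ r : Fin (n+1) → F, g x r)
      = ∑ x : Fin (n+1) → F, ∑ r : Fin n → F, ∑ a : F, ∑ b : F,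
          g (Fin.cons a x) (Fin.cons b r) := by
  rw [sum_pi_succ (fun x => ∑ r : Fin (n+1) → F, g x r), Finset.sum_comm]
  refine Finset.sum_congr rfl fun x _ => ?_
  rw [Finset.sum_comm]
  rw [sum_pi_succ (fun r => ∑ a : F, g (Fin.cons a x) r), Finset.sum_comm]
  refine Finset.sum_congr rfl fun r _ => Finset.sum_comm

variable (hodd : ringChar F ≠ 2) (h4 : quadraticChar F (-1) = 1)

lemma chi_sq_mul (b : F) :
    ∑ t : F, (quadraticChar F (t^2 * b) : ℤ)
      = ((Fintype.card F : ℤ) - 1) * quadraticChar F b := by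
  have h : ∀ t : F, (quadraticChar F (t^2 * b) : ℤ)
      = (if t = 0 then 0 else 1) * quadraticChar F b := by
    intro t
    rw [map_mul]
    congr 1
    split_ifs with ht
    · simp [ht]
    · exact_mod_cast quadraticChar_sq_one' ht
  simp_rw [h, ← Finset.sum_mul]
  congr 1
  have h2 : ∀ t : F, (if t = 0 then (0:ℤ) else 1) = 1 - (if t = 0 then 1 else 0) := by
    intro t; split_ifs <;> ring
  simp_rw [h2, Finset.sum_sub_distrib, Finset.sum_const, Finset.card_univ,
    Finset.sum_ite_eq' Finset.univ (0:F) (fun _ => (1:ℤ))]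
  simp

include hodd h4 in
lemma inner1 (a b : F) :
    ∑ x0 : F, ∑ r0 : F, (quadraticChar F (x0 * a - r0^2 * b) : ℤ)
      = if a = 0 then (Fintype.card F : ℤ) * ((Fintype.card F : ℤ) - 1) * quadraticChar F b
        else 0 := by
  by_cases ha : a = 0
  · rw [if_pos ha]
    have h : ∀ x0 r0 : F, x0 * a - r0^2 * b = r0^2 * (-b) := by
      intro x0 r0; rw [ha]; ring
    simp_rw [h]
    rw [Finset.sum_const, Finset.card_univ, nsmul_eq_mul, chi_sq_mul]
    have h2 : (quadraticChar F (-b) : ℤ) = quadraticChar F b := by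
      rw [show (-b : F) = (-1) * b by ring, map_mul, h4, one_mul]
    rw [h2]; ring
  · rw [if_neg ha, Finset.sum_comm]
    refine Finset.sum_eq_zero fun r0 _ => ?_
    have hbij : Function.Bijective (fun t : F => t * a - r0^2 * b) := by
      constructor
      · intro s t hst
        simp only at hst
        have h : s * a = t * a := by linear_combination hst
        exact mul_right_cancel₀ ha h
      · intro t
        exact ⟨(t + r0^2*b) * a⁻¹, by field_simp; ring⟩
    rw [Fintype.sum_bijective _ hbij _ (fun t => (quadraticChar F t : ℤ)) (fun t => rfl)]
    exact_mod_cast quadraticChar_sum_zero hodd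

lemma inner2 (a b : F) :
    ∑ x0 : F, ∑ r0 : F, (if x0 * a - r0^2 * b = 0 then (quadraticChar F a : ℤ) else 0)
      = (Fintype.card F : ℤ) * quadraticChar F a := by
  by_cases ha : a = 0
  · simp [ha]
  · rw [Finset.sum_comm]
    have h : ∀ r0 : F, ∑ x0 : F, (if x0 * a - r0^2 * b = 0 then (quadraticChar F a : ℤ) else 0)
        = quadraticChar F a := by
      intro r0
      have hcond : ∀ x0 : F, (x0 * a - r0^2 * b = 0) ↔ x0 = r0^2 * b * a⁻¹ := by
        intro x0
        rw [sub_eq_zero, eq_mul_inv_iff_mul_eq₀ ha]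
      simp_rw [hcond]
      rw [Finset.sum_ite_eq' Finset.univ (r0^2*b*a⁻¹) (fun _ => (quadraticChar F a : ℤ))]
      simp
    rw [Finset.sum_congr rfl fun r0 _ => h r0, Finset.sum_const, Finset.card_univ, nsmul_eq_mul]

include hodd h4 in
lemma S_rec (n : ℕ) :
    S F (n+2) = (Fintype.card F : ℤ) * ((Fintype.card F : ℤ) - 1) * T F (n+1) := by
  unfold S T
  show (∑ x : Fin (n+2) → F, ∑ r : Fin (n+1) → F,
      (quadraticChar F (Dp (n+2) (ex x) (ex r)) : ℤ))
    = (Fintype.card F : ℤ) * ((Fintype.card F : ℤ) - 1) *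
      ∑ x : Fin (n+1) → F, ∑ r : Fin n → F,
        if Dp (n+1) (ex x) (ex r) = 0 then
          (quadraticChar F (Dp n (shf (ex x)) (shf (ex r))) : ℤ) else 0
  rw [peel (fun x r => (quadraticChar F (Dp (n+2) (ex x) (ex r)) : ℤ))]
  rw [Finset.mul_sum]
  refine Finset.sum_congr rfl fun x _ => ?_
  rw [Finset.mul_sum]
  refine Finset.sum_congr rfl fun r _ => ?_
  have hD : ∀ a b : F, Dp (n+2) (ex (Fin.cons a x)) (ex (Fin.cons b r))
      = a * Dp (n+1) (ex x) (ex r) - b^2 * Dp n (shf (ex x)) (shf (ex r)) := by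
    intro a b
    show ex (Fin.cons a x) 0 * Dp (n+1) (shf (ex (Fin.cons a x))) (shf (ex (Fin.cons b r)))
        - (ex (Fin.cons b r) 0)^2 * _ = _
    rw [ex_cons_zero, ex_cons_zero, shf_ex_cons, shf_ex_cons]
  simp_rw [hD]
  rw [inner1 hodd h4]
  split_ifs <;> simp

set_option maxHeartbeats 1000000 in
lemma T_rec (n : ℕ) : T F (n+2) = (Fintype.card F : ℤ) * S F (n+1) := by
  unfold S T
  show (∑ x : Fin (n+2) → F, ∑ r : Fin (n+1) → F,
      if Dp (n+2) (ex x) (ex r) = 0 then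
        (quadraticChar F (Dp (n+1) (shf (ex x)) (shf (ex r))) : ℤ) else 0)
    = (Fintype.card F : ℤ) *
      ∑ x : Fin (n+1) → F, ∑ r : Fin n → F, (quadraticChar F (Dp (n+1) (ex x) (ex r)) : ℤ)
  rw [peel (fun x r => if Dp (n+2) (ex x) (ex r) = 0 then
      (quadraticChar F (Dp (n+1) (shf (ex x)) (shf (ex r))) : ℤ) else 0)]
  rw [Finset.mul_sum]
  refine Finset.sum_congr rfl fun x _ => ?_
  rw [Finset.mul_sum]
  refine Finset.sum_congr rfl fun r _ => ?_
  have hD : ∀ a b : F, Dp (n+2) (ex (Fin.cons a x)) (ex (Fin.cons b r))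
      = a * Dp (n+1) (ex x) (ex r) - b^2 * Dp n (shf (ex x)) (shf (ex r)) := by
    intro a b
    show ex (Fin.cons a x) 0 * Dp (n+1) (shf (ex (Fin.cons a x))) (shf (ex (Fin.cons b r)))
        - (ex (Fin.cons b r) 0)^2 * _ = _
    rw [ex_cons_zero, ex_cons_zero, shf_ex_cons, shf_ex_cons]
  have hstep : ∀ a b : F,
      (if Dp (n+2) (ex (Fin.cons a x)) (ex (Fin.cons b r)) = 0 then
        (quadraticChar F (Dp (n+1) (shf (ex (Fin.cons a x))) (shf (ex (Fin.cons b r)))) : ℤ)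
       else 0)
      = (if a * Dp (n+1) (ex x) (ex r) - b^2 * Dp n (shf (ex x)) (shf (ex r)) = 0 then
        (quadraticChar F (Dp (n+1) (ex x) (ex r)) : ℤ) else 0) := by
    intro a b
    rw [shf_ex_cons a x, shf_ex_cons b r]
    exact if_congr (by rw [hD a b]) rfl rfl
  rw [Finset.sum_congr rfl fun a _ => Finset.sum_congr rfl fun b _ => hstep a b]
  exact inner2 _ _

lemma T_one : T F 1 = 1 := by
  unfold T
  have h1 : ∀ x : Fin 1 → F, ∑ r : Fin 0 → F,
      (if Dp 1 (ex x) (ex r) = 0 then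
        (quadraticChar F (Dp 0 (shf (ex x)) (shf (ex r))) : ℤ) else 0)
      = if x 0 = 0 then 1 else 0 := by
    intro x
    rw [Fintype.sum_unique]
    have h : Dp 1 (ex x) (ex (default : Fin 0 → F)) = x 0 := by
      show ex x 0 = x 0
      simp [ex]
    rw [h]
    congr 1
    show (quadraticChar F (1 : F) : ℤ) = 1
    simp
  rw [Finset.sum_congr rfl fun x _ => h1 x]
  have hbij : Function.Bijective (fun a : F => (fun _ : Fin 1 => a)) := by
    constructor
    · intro s t hst
      exact congrFun hst 0
    · intro f
      exact ⟨f 0, by funext i; rw [Subsingleton.elim i 0]⟩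
  rw [← Fintype.sum_bijective _ hbij (fun a : F => if a = 0 then (1:ℤ) else 0)
      (fun x => if x 0 = 0 then (1:ℤ) else 0) (fun a => rfl)]
  rw [Finset.sum_ite_eq' Finset.univ (0:F) (fun _ => (1:ℤ))]
  simp

end CharSumAux

open CharSumAux in
/-- For `q ≡ 1 (mod 4)` an odd prime power, `S_{2m} = q^{2m-1} (q-1)^m` for all `m ≥ 1`. -/
theorem charSumST_even_one_mod_four (F : Type*) [Field F] [Fintype F] [DecidableEq F]
    (hq : Odd (Fintype.card F)) (hq4 : Fintype.card F % 4 = 1) :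
    ∀ m : ℕ, 1 ≤ m →
      charSumST F (2 * m) =
        (Fintype.card F : ℤ) ^ (2 * m - 1) * ((Fintype.card F : ℤ) - 1) ^ m := by
  have hodd : ringChar F ≠ 2 := by
    intro h
    have h1 := FiniteField.even_card_of_char_two h
    have h2 := Nat.odd_iff.mp hq
    omega
  have h4 : quadraticChar F (-1) = 1 := by
    rw [quadraticChar_neg_one hodd]
    exact ZMod.χ₄_nat_one_mod_four hq4
  have key : ∀ k : ℕ, S F (2*k+2)
      = (Fintype.card F : ℤ)^(2*k+1) * ((Fintype.card F : ℤ)-1)^(k+1) := by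
    intro k
    induction k with
    | zero =>
      rw [show 2*0+2 = 0+2 from rfl, S_rec hodd h4, T_one]
      ring
    | succ k ih =>
      rw [show 2*(k+1)+2 = (2*k+2)+2 from by omega, S_rec hodd h4,
        show (2*k+2)+1 = (2*k+1)+2 from by omega, T_rec, ih]
      ring
  intro m hm
  obtain ⟨k, rfl⟩ : ∃ k, m = k + 1 := ⟨m - 1, by omega⟩
  rw [S_eq_charSumST, show 2*(k+1) = 2*k+2 from by ring, key k,
    show 2*k+2 - 1 = 2*k+1 from by omega]
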